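/- For all even integers n ≥ 4 and even k with 4 ≤ k ≤ n, the inequality C(n/2, k/2)/C(n, k) ≤ ∏_{i=0}^{k/2−1} (k − 2i)/(n − 2i) holds, and each factor (k−2i)/(n−2i) ≤ k/n, giving C(n/2, k/2)/C(n, k) ≤ (k/n)^{k/2}. -/

import Mathlib

open Finset in
lemma aux_prod_eq (m j : ℕ) (h : j ≤ m) :
    ∏ i ∈ Finset.range j, (2 * (m : ℝ) - 2 * i) = 2 ^ j * (m.descFactorial j : ℝ) := by
  induction j with
  | zero => simp
  | succ j ih =>
    rw [Finset.prod_range_succ, ih (by omega), Nat.descFactorial_succ]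
    have hjm : (j : ℝ) ≤ m := by exact_mod_cast (by omega : j ≤ m)
    push_cast [Nat.cast_sub (by omega : j ≤ m)]
    ring

theorem stmt_14 (n k : ℕ) (hn : Even n) (hn4 : 4 ≤ n) (hk : Even k)
    (hk4 : 4 ≤ k) (hkn : k ≤ n) :
    ((n / 2).choose (k / 2) : ℝ) / (n.choose k : ℝ) ≤
        ∏ i ∈ Finset.range (k / 2), ((k : ℝ) - 2 * i) / ((n : ℝ) - 2 * i) ∧
    (∀ i ∈ Finset.range (k / 2),
        ((k : ℝ) - 2 * i) / ((n : ℝ) - 2 * i) ≤ (k : ℝ) / (n : ℝ)) ∧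
    ((n / 2).choose (k / 2) : ℝ) / (n.choose k : ℝ) ≤ ((k : ℝ) / n) ^ (k / 2) := by
  obtain ⟨m, hm⟩ := hn
  obtain ⟨j, hjk⟩ := hk
  have hn2 : n = 2 * m := by omega
  have hk2 : k = 2 * j := by omega
  have hjm : j ≤ m := by omega
  have hnd : n / 2 = m := by omega
  have hkd : k / 2 = j := by omega
  -- Vandermonde consequence
  have hV : m.choose j * m.choose j ≤ n.choose k := by
    rw [hn2, hk2, two_mul, two_mul, Nat.add_choose_eq]
    exact Finset.single_le_sum (f := fun ij : ℕ × ℕ => m.choose ij.1 * m.choose ij.2)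
      (fun i _ => Nat.zero_le _) (a := ((j, j) : ℕ × ℕ)) (Finset.HasAntidiagonal.mem_antidiagonal.2 rfl)
  have hCn : 0 < n.choose k := Nat.choose_pos hkn
  have hCnR : (0 : ℝ) < (n.choose k : ℝ) := by exact_mod_cast hCn
  -- products
  have hprodk : ∏ i ∈ Finset.range j, ((k : ℝ) - 2 * i) = 2 ^ j * (j.factorial : ℝ) := by
    have := aux_prod_eq j j le_rfl
    rw [Nat.descFactorial_self] at this
    simpa [hk2, Nat.cast_ofNat] using this
  have hprodn : ∏ i ∈ Finset.range j, ((n : ℝ) - 2 * i)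
      = 2 ^ j * (m.descFactorial j : ℝ) := by
    have := aux_prod_eq m j hjm
    simpa [hn2] using this
  have hposden : ∀ i ∈ Finset.range j, (0 : ℝ) < (n : ℝ) - 2 * i := by
    intro i hi
    simp only [Finset.mem_range] at hi
    have : 2 * i + 1 ≤ n := by omega
    have := (Nat.cast_le (α := ℝ)).2 this
    push_cast at this
    linarith
  have hposnum : ∀ i ∈ Finset.range j, (0 : ℝ) < (k : ℝ) - 2 * i := by
    intro i hi
    simp only [Finset.mem_range] at hi
    have : 2 * i + 1 ≤ k := by omega
    have := (Nat.cast_le (α := ℝ)).2 this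
    push_cast at this
    linarith
  have hprodden_pos : (0 : ℝ) < ∏ i ∈ Finset.range j, ((n : ℝ) - 2 * i) :=
    Finset.prod_pos hposden
  have h1 : ((n / 2).choose (k / 2) : ℝ) / (n.choose k : ℝ) ≤
      ∏ i ∈ Finset.range (k / 2), ((k : ℝ) - 2 * i) / ((n : ℝ) - 2 * i) := by
    rw [hnd, hkd, Finset.prod_div_distrib, div_le_div_iff₀ hCnR hprodden_pos,
      hprodk, hprodn]
    have hD : (m.descFactorial j : ℝ) = (j.factorial : ℝ) * (m.choose j : ℝ) := by
      exact_mod_cast congrArg (Nat.cast (R := ℝ)) (Nat.descFactorial_eq_factorial_mul_choose m j)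
    rw [hD]
    have hVR : (m.choose j : ℝ) * (m.choose j : ℝ) ≤ (n.choose k : ℝ) := by
      exact_mod_cast hV
    have h2j : (0 : ℝ) < 2 ^ j := by positivity
    have hfac : (0 : ℝ) < (j.factorial : ℝ) := by exact_mod_cast j.factorial_pos
    nlinarith [mul_le_mul_of_nonneg_left hVR (by positivity : (0:ℝ) ≤ 2 ^ j * (j.factorial : ℝ))]
  have h2 : ∀ i ∈ Finset.range (k / 2),
      ((k : ℝ) - 2 * i) / ((n : ℝ) - 2 * i) ≤ (k : ℝ) / (n : ℝ) := by
    intro i hi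
    rw [hkd] at hi
    have hd := hposden i hi
    have hnpos : (0 : ℝ) < (n : ℝ) := by
      have : 0 < n := by omega
      exact_mod_cast this
    rw [div_le_div_iff₀ hd hnpos]
    have hknR : (k : ℝ) ≤ (n : ℝ) := by exact_mod_cast hkn
    have hiR : (0 : ℝ) ≤ (i : ℝ) := by positivity
    nlinarith
  refine ⟨h1, h2, ?_⟩
  calc ((n / 2).choose (k / 2) : ℝ) / (n.choose k : ℝ)
      ≤ ∏ i ∈ Finset.range (k / 2), ((k : ℝ) - 2 * i) / ((n : ℝ) - 2 * i) := h1
    _ ≤ ∏ _i ∈ Finset.range (k / 2), (k : ℝ) / (n : ℝ) := by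
        apply Finset.prod_le_prod
        · intro i hi
          rw [hkd] at hi
          exact le_of_lt (div_pos (hposnum i hi) (hposden i hi))
        · exact h2
    _ = ((k : ℝ) / n) ^ (k / 2) := by rw [Finset.prod_const, Finset.card_range]
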